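/- arXiv:2103.05172 — 10 statements merged into one kernel-verified Lean document; each statement's English description precedes it below -/
import Mathlib

section
/- Let G = (V, E) be a strongly connected digraph on n ≥ 2 nodes (no self-loops), let D⁺_j denote the out-degree of node j, and let D⁺_max = max_j D⁺_j. Define the n×n real matrix B by B l j = 1/(1 + D⁺_j) if l = j or there is an edge from j to l, and B l j = 0 otherwise. Then for every pair of nodes i, j, the (i,j) entry of the matrix power B^(n−1) satisfies (B^(n−1)) i j ≥ (1 + D⁺_max)^(−(n−1)) > 0. (This is the matrix form of Lemma 1: the probability that a token started at node j and moved at each step according to the column-stochastic transition probabilities b_{lj} is at node i after exactly n−1 steps is at least (1 + D⁺_max)^(−(n−1)).) -/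
open Finset

/-- Walks of exactly `k` steps under relation `r`. -/
def Rwalk {α : Type*} (r : α → α → Prop) : ℕ → α → α → Prop
  | 0, a, b => a = b
  | (k+1), a, b => ∃ c, r a c ∧ Rwalk r k c b

lemma rwalk_pad {α : Type*} {r : α → α → Prop} (hr : ∀ x, r x x) :
    ∀ {k a b}, Rwalk r k a b → Rwalk r (k+1) a b := by
  intro k a b h
  exact ⟨a, hr a, h⟩

lemma rwalk_refl {α : Type*} {r : α → α → Prop} (hr : ∀ x, r x x) :
    ∀ k a, Rwalk r k a a := by
  intro k a
  induction k with
  | zero => rfl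
  | succ k ih => exact rwalk_pad hr ih

lemma rwalk_tail {α : Type*} {r : α → α → Prop} :
    ∀ {k a b c}, Rwalk r k a b → r b c → Rwalk r (k+1) a c := by
  intro k
  induction k with
  | zero => intro a b c h hbc; cases h; exact ⟨c, hbc, rfl⟩
  | succ k ih =>
      intro a b c h hbc
      obtain ⟨d, had, hdb⟩ := h
      exact ⟨d, had, ih hdb hbc⟩

lemma rwalk_all (n : ℕ) (hn : 2 ≤ n) (E : Fin n → Fin n → Prop)
    (hconn : ∀ i j : Fin n, i ≠ j → Relation.TransGen E j i) :
    ∀ i j : Fin n, Rwalk (fun a b => a = b ∨ E a b) (n - 1) i j := by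
  classical
  intro i j
  set r : Fin n → Fin n → Prop := fun a b => a = b ∨ E a b with hr
  have hrefl : ∀ x, r x x := fun x => Or.inl rfl
  set T : ℕ → Finset (Fin n) := fun k => univ.filter (fun x => Rwalk r k i x) with hT
  have hsub : ∀ k, T k ⊆ T (k+1) := by
    intro k x hx
    simp only [hT, mem_filter, mem_univ, true_and] at hx ⊢
    exact rwalk_pad hrefl hx
  have hgrow : ∀ k, T k = univ ∨ T k ⊂ T (k+1) := by
    intro k
    by_cases heq : T (k+1) = T k
    · left
      apply Finset.eq_univ_of_forall
      intro j'
      simp only [hT, mem_filter, mem_univ, true_and]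
      have hstep : ∀ x, Rwalk r (k+1) i x → Rwalk r k i x := by
        intro x hx
        have : x ∈ T (k+1) := by simp only [hT, mem_filter, mem_univ, true_and]; exact hx
        rw [heq] at this
        simpa only [hT, mem_filter, mem_univ, true_and] using this
      by_cases hji : j' = i
      · subst hji; exact rwalk_refl hrefl k j'
      · have htg : Relation.TransGen E i j' := hconn j' i hji
        clear hji
        induction htg with
        | single h => exact hstep _ (rwalk_tail (rwalk_refl hrefl k i) (Or.inr h))
        | tail _ h ih => exact hstep _ (rwalk_tail ih (Or.inr h))
    · right
      exact (Finset.ssubset_iff_of_subset (hsub k)).2 (by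
        rcases Finset.exists_of_ssubset (Finset.ssubset_iff_subset_ne.2 ⟨hsub k, fun h => heq h.symm⟩) with ⟨x, hx1, hx2⟩
        exact ⟨x, hx1, hx2⟩)
  have hcard : ∀ k, T k = univ ∨ k + 1 ≤ (T k).card := by
    intro k
    induction k with
    | zero =>
        right
        have : i ∈ T 0 := by simp only [hT, mem_filter, mem_univ, true_and]; rfl
        exact Finset.card_pos.2 ⟨i, this⟩
    | succ k ih =>
        rcases ih with h | h
        · left
          exact Finset.eq_univ_of_forall (fun x => hsub k (h ▸ Finset.mem_univ x))
        · rcases hgrow k with h2 | h2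
          · left
            exact Finset.eq_univ_of_forall (fun x => hsub k (h2 ▸ Finset.mem_univ x))
          · right
            have := Finset.card_lt_card h2
            omega
  have hfin : T (n-1) = univ := by
    rcases hcard (n-1) with h | h
    · exact h
    · apply Finset.eq_univ_of_card
      have h1 : (T (n-1)).card ≤ (univ : Finset (Fin n)).card := Finset.card_le_card (Finset.subset_univ _)
      simp only [Finset.card_univ, Fintype.card_fin] at h1 ⊢
      omega
  have : j ∈ T (n-1) := hfin ▸ Finset.mem_univ j
  simpa only [hT, mem_filter, mem_univ, true_and] using this

/-- Lemma 1 (matrix form): for the column-stochastic matrix `B` of the token random walk on a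
strongly connected digraph on `n ≥ 2` nodes, every entry of `B ^ (n-1)` is at least
`(1 + D⁺_max)^(-(n-1)) > 0`. -/
theorem stmt_0 (n : ℕ) (hn : 2 ≤ n) (E : Fin n → Fin n → Prop) [DecidableRel E]
    (hirr : ∀ j, ¬ E j j)
    (hconn : ∀ i j : Fin n, i ≠ j → Relation.TransGen E j i)
    (Dplus : Fin n → ℕ)
    (hD : ∀ j, Dplus j = (Finset.univ.filter (fun l => E l j)).card)
    (Dmax : ℕ) (hDmax : Dmax = Finset.univ.sup Dplus)
    (B : Matrix (Fin n) (Fin n) ℝ)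
    (hB : ∀ l j, B l j = if l = j ∨ E l j then (1 + (Dplus j : ℝ))⁻¹ else 0) :
    ∀ i j : Fin n, (0 : ℝ) < (1 + (Dmax : ℝ)) ^ (-((n : ℤ) - 1)) ∧
      (1 + (Dmax : ℝ)) ^ (-((n : ℤ) - 1)) ≤ (B ^ (n - 1)) i j := by
  have hDpos : (0:ℝ) < 1 + (Dmax : ℝ) := by positivity
  set c : ℝ := (1 + (Dmax : ℝ))⁻¹ with hc
  have hcpos : 0 < c := by positivity
  -- entries of B are nonnegative
  have hBnn : ∀ l j, 0 ≤ B l j := by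
    intro l j
    rw [hB]
    split
    · positivity
    · exact le_refl 0
  -- entries of powers of B are nonnegative
  have hPnn : ∀ k l j, 0 ≤ (B ^ k) l j := by
    intro k
    induction k with
    | zero =>
        intro l j
        simp only [pow_zero, Matrix.one_apply]
        split <;> norm_num
    | succ k ih =>
        intro l j
        rw [pow_succ', Matrix.mul_apply]
        exact Finset.sum_nonneg (fun m _ => mul_nonneg (hBnn l m) (ih m j))
  -- B entries where there's a "loop-or-edge" are at least c
  have hBc : ∀ l j, (l = j ∨ E l j) → c ≤ B l j := by
    intro l j h
    rw [hB, if_pos h, hc]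
    apply inv_anti₀
    · positivity
    · have : Dplus j ≤ Dmax := hDmax ▸ Finset.le_sup (Finset.mem_univ j)
      have := (Nat.cast_le (α := ℝ)).2 this
      linarith
  -- key induction: walk of length k gives (B^k) i j ≥ c^k
  have key : ∀ k i j, Rwalk (fun a b => a = b ∨ E a b) k i j → c ^ k ≤ (B ^ k) i j := by
    intro k
    induction k with
    | zero =>
        intro i j h
        cases h
        simp [Matrix.one_apply]
    | succ k ih =>
        intro i j h
        obtain ⟨m, him, hwalk⟩ := h
        calc c ^ (k+1) = c * c ^ k := by ring
          _ ≤ B i m * (B ^ k) m j :=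
              mul_le_mul (hBc i m him) (ih m j hwalk) (by positivity) (hBnn i m)
          _ ≤ ∑ l, B i l * (B ^ k) l j :=
              Finset.single_le_sum (fun l _ => mul_nonneg (hBnn i l) (hPnn k l j))
                (Finset.mem_univ m)
          _ = (B ^ (k+1)) i j := by rw [pow_succ', Matrix.mul_apply]
  intro i j
  have hwalk := rwalk_all n hn E hconn i j
  have hkey := key (n-1) i j hwalk
  have hz : (1 + (Dmax : ℝ)) ^ (-((n : ℤ) - 1)) = c ^ (n - 1) := by
    have h1 : -((n : ℤ) - 1) = -((n - 1 : ℕ) : ℤ) := by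
      have : (1:ℕ) ≤ n := by omega
      push_cast [Nat.cast_sub this]
      ring
    rw [h1, zpow_neg, zpow_natCast, hc, inv_pow]
  constructor
  · rw [hz]; positivity
  · rw [hz]; exact hkey
end

section
/- Let B be an n×n column-stochastic real matrix (n ≥ 2), fix a node i, and let p be a real number with 0 < p ≤ 1 such that (B^(n−1)) i j ≥ p for every column j. Let Q be the matrix obtained from B by replacing row i and column i with zeros. Then for every natural number τ and every column j ≠ i, the column sum Σ_l (Q^(τ(n−1))) l j is at most (1 − p)^τ. (This captures the claim that the probability that a Markov-chain token started at j has not visited node i during τ(n−1) steps is at most (1 − p)^τ.) -/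
/-- Taboo-probability bound: if every entry of row `i` of `B^(n-1)` is at least `p`, and `Q`
is `B` with row `i` and column `i` zeroed out, then for every `τ` and every `j ≠ i` the
column sum of `Q^(τ(n-1))` at `j` is at most `(1 - p)^τ`. -/
theorem stmt_4 (n : ℕ) (hn : 2 ≤ n) (B : Matrix (Fin n) (Fin n) ℝ)
    (hnonneg : ∀ l j, 0 ≤ B l j) (hcol : ∀ j, ∑ l, B l j = 1)
    (i : Fin n) (p : ℝ) (hp0 : 0 < p) (hp1 : p ≤ 1)
    (hpow : ∀ j, p ≤ (B ^ (n - 1)) i j)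
    (Q : Matrix (Fin n) (Fin n) ℝ)
    (hQ : ∀ l j, Q l j = if l = i ∨ j = i then 0 else B l j) :
    ∀ (τ : ℕ) (j : Fin n), j ≠ i → ∑ l, (Q ^ (τ * (n - 1))) l j ≤ (1 - p) ^ τ := by
  have hn1 : 1 ≤ n - 1 := by omega
  have hQnn : ∀ l j, 0 ≤ Q l j := by
    intro l j; rw [hQ]; split
    · exact le_rfl
    · exact hnonneg l j
  have hQB : ∀ l j, Q l j ≤ B l j := by
    intro l j; rw [hQ]; split
    · exact hnonneg l j
    · exact le_rfl
  have hpowQnn : ∀ k l j, 0 ≤ (Q ^ k) l j := by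
    intro k
    induction k with
    | zero => intro l j; simp [Matrix.one_apply]; split <;> norm_num
    | succ k ih =>
      intro l j
      rw [pow_succ, Matrix.mul_apply]
      exact Finset.sum_nonneg fun m _ => mul_nonneg (ih l m) (hQnn m j)
  have hpowBnn : ∀ k l j, 0 ≤ (B ^ k) l j := by
    intro k
    induction k with
    | zero => intro l j; simp [Matrix.one_apply]; split <;> norm_num
    | succ k ih =>
      intro l j
      rw [pow_succ, Matrix.mul_apply]
      exact Finset.sum_nonneg fun m _ => mul_nonneg (ih l m) (hnonneg m j)
  have hpowQB : ∀ k l j, (Q ^ k) l j ≤ (B ^ k) l j := by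
    intro k
    induction k with
    | zero => intro l j; simp
    | succ k ih =>
      intro l j
      rw [pow_succ, Matrix.mul_apply, pow_succ, Matrix.mul_apply]
      exact Finset.sum_le_sum fun m _ =>
        mul_le_mul (ih l m) (hQB m j) (hQnn m j) (hpowBnn k l m)
  have hcolpow : ∀ k j, ∑ l, (B ^ k) l j = 1 := by
    intro k
    induction k with
    | zero => intro j; simp [Matrix.one_apply]
    | succ k ih =>
      intro j
      rw [pow_succ']
      simp only [Matrix.mul_apply]
      rw [Finset.sum_comm]
      have : ∀ m : Fin n, ∑ l, B l m * (B ^ k) m j = (B ^ k) m j := by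
        intro m
        rw [← Finset.sum_mul, hcol m, one_mul]
      rw [Finset.sum_congr rfl fun m _ => this m, ih j]
  -- row i of Q^k is zero for k ≥ 1
  have hrow : ∀ k, 1 ≤ k → ∀ j, (Q ^ k) i j = 0 := by
    intro k hk j
    obtain ⟨k', rfl⟩ : ∃ k', k = k' + 1 := ⟨k - 1, by omega⟩
    rw [pow_succ', Matrix.mul_apply]
    apply Finset.sum_eq_zero
    intro m _
    rw [hQ i m, if_pos (Or.inl rfl), zero_mul]
  -- column i of Q^k is zero for k ≥ 1
  have hcoli : ∀ k, 1 ≤ k → ∀ l, (Q ^ k) l i = 0 := by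
    intro k hk l
    obtain ⟨k', rfl⟩ : ∃ k', k = k' + 1 := ⟨k - 1, by omega⟩
    rw [pow_succ, Matrix.mul_apply]
    apply Finset.sum_eq_zero
    intro m _
    rw [hQ m i, if_pos (Or.inr rfl), mul_zero]
  -- one-step bound
  have hstep : ∀ j : Fin n, j ≠ i → ∑ l, (Q ^ (n - 1)) l j ≤ 1 - p := by
    intro j hj
    have h1 : ∑ l ∈ Finset.univ.erase i, (Q ^ (n - 1)) l j + (Q ^ (n - 1)) i j
        = ∑ l, (Q ^ (n - 1)) l j := Finset.sum_erase_add _ _ (Finset.mem_univ i)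
    have h2 : ∑ l ∈ Finset.univ.erase i, (B ^ (n - 1)) l j + (B ^ (n - 1)) i j
        = ∑ l, (B ^ (n - 1)) l j := Finset.sum_erase_add _ _ (Finset.mem_univ i)
    have h3 : ∑ l ∈ Finset.univ.erase i, (B ^ (n - 1)) l j = 1 - (B ^ (n - 1)) i j := by
      rw [hcolpow (n - 1) j] at h2; linarith
    calc ∑ l, (Q ^ (n - 1)) l j
        = ∑ l ∈ Finset.univ.erase i, (Q ^ (n - 1)) l j := by
          rw [← h1, hrow (n - 1) hn1 j, add_zero]
      _ ≤ ∑ l ∈ Finset.univ.erase i, (B ^ (n - 1)) l j :=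
          Finset.sum_le_sum fun l _ => hpowQB (n - 1) l j
      _ = 1 - (B ^ (n - 1)) i j := h3
      _ ≤ 1 - p := by linarith [hpow j]
  -- main induction
  intro τ
  induction τ with
  | zero =>
    intro j hj
    simp [Matrix.one_apply]
  | succ τ ih =>
    intro j hj
    have hτ : (τ + 1) * (n - 1) = (n - 1) + τ * (n - 1) := by ring
    rw [hτ, pow_add]
    have key : ∀ m : Fin n,
        (∑ l, (Q ^ (n - 1)) l m) * (Q ^ (τ * (n - 1))) m j
          ≤ (1 - p) * (Q ^ (τ * (n - 1))) m j := by
      intro m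
      by_cases hm : m = i
      · rw [hm]
        have : ∑ l, (Q ^ (n - 1)) l i = 0 :=
          Finset.sum_eq_zero fun l _ => hcoli (n - 1) hn1 l
        rw [this, zero_mul]
        exact mul_nonneg (by linarith) (hpowQnn _ _ _)
      · exact mul_le_mul_of_nonneg_right (hstep m hm) (hpowQnn _ _ _)
    calc ∑ l, ((Q ^ (n - 1)) * Q ^ (τ * (n - 1))) l j
        = ∑ m, (∑ l, (Q ^ (n - 1)) l m) * (Q ^ (τ * (n - 1))) m j := by
          simp only [Matrix.mul_apply]
          rw [Finset.sum_comm]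
          exact Finset.sum_congr rfl fun m _ => by rw [Finset.sum_mul]
      _ ≤ ∑ m, (1 - p) * (Q ^ (τ * (n - 1))) m j :=
          Finset.sum_le_sum fun m _ => key m
      _ = (1 - p) * ∑ m, (Q ^ (τ * (n - 1))) m j := by rw [Finset.mul_sum]
      _ ≤ (1 - p) * (1 - p) ^ τ :=
          mul_le_mul_of_nonneg_left (ih j hj) (by linarith)
      _ = (1 - p) ^ (τ + 1) := by ring
end

section
/- Let L, a, b be integers, and let a' = ⌈(a+b)/2⌉ and b' = ⌊(a+b)/2⌋ be the near-averages of a and b. Then (Y₁(a') + Y₂(a')) + (Y₁(b') + Y₂(b')) ≤ (Y₁(a) + Y₂(a)) + (Y₁(b) + Y₂(b)), where Y₁(x) = max(x − (L+1), 0) and Y₂(x) = max(L − x, 0). (Replacing two token values by their near-averages never increases the Lyapunov function Y = Y₁ + Y₂.) -/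
/-- Replacing two token values by their near-averages never increases the Lyapunov
function `Y = Y₁ + Y₂`, where `Y₁(x) = max(x - (L+1), 0)` and `Y₂(x) = max(L - x, 0)`. -/
theorem stmt_5 (L a b : ℤ) (a' b' : ℤ)
    (ha' : a' = ⌈((a : ℚ) + (b : ℚ)) / 2⌉) (hb' : b' = ⌊((a : ℚ) + (b : ℚ)) / 2⌋) :
    (max (a' - (L + 1)) 0 + max (L - a') 0) + (max (b' - (L + 1)) 0 + max (L - b') 0) ≤
      (max (a - (L + 1)) 0 + max (L - a) 0) + (max (b - (L + 1)) 0 + max (L - b) 0) := by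
  set x : ℚ := ((a : ℚ) + (b : ℚ)) / 2 with hx
  have hf1 : (b' : ℚ) ≤ x := hb' ▸ Int.floor_le x
  have hf2 : x < (b' : ℚ) + 1 := hb' ▸ Int.lt_floor_add_one x
  have hc1 : x ≤ (a' : ℚ) := ha' ▸ Int.le_ceil x
  have hc2 : (a' : ℚ) - 1 < x := ha' ▸ by
    linarith [Int.ceil_lt_add_one x]
  have h1 : 2 * b' ≤ a + b := by
    have : (2 * b' : ℚ) ≤ (a : ℚ) + b := by rw [hx] at hf1; linarith
    exact_mod_cast this
  have h2 : a + b ≤ 2 * b' + 1 := by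
    have : ((a : ℚ) + b) < 2 * b' + 2 := by rw [hx] at hf2; linarith
    have : ((a : ℚ) + b) ≤ 2 * b' + 1 := by
      have h' : (a + b : ℤ) < 2 * b' + 2 := by exact_mod_cast this
      exact_mod_cast (by omega : (a + b : ℤ) ≤ 2 * b' + 1)
    exact_mod_cast this
  have h3 : a + b ≤ 2 * a' := by
    have : ((a : ℚ) + b) ≤ 2 * a' := by rw [hx] at hc1; linarith
    exact_mod_cast this
  have h4 : 2 * a' - 1 ≤ a + b := by
    have : (2 * a' : ℚ) - 2 < (a : ℚ) + b := by rw [hx] at hc2; linarith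
    have h' : (2 * a' : ℤ) - 2 < a + b := by exact_mod_cast this
    omega
  simp only [max_def]
  split_ifs <;> omega
end

section
/- Let L, a, b be integers with a ≥ L + 2 and b ≤ L, and let a' = ⌈(a+b)/2⌉ and b' = ⌊(a+b)/2⌋ be the near-averages of a and b. Then Y₁(a') + Y₁(b') ≤ Y₁(a) + Y₁(b) − 1, where Y₁(x) = max(x − (L+1), 0). (Case (i): when a token with value strictly above the ceiling L+1 meets a token with value at most the floor L, the Lyapunov function Y₁ decreases by at least 1.) -/
/-- Case (i): when a token with value strictly above the ceiling `L+1` meets a token with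
value at most the floor `L`, the Lyapunov function `Y₁` decreases by at least 1. -/
theorem stmt_6 (L a b : ℤ) (ha : a ≥ L + 2) (hb : b ≤ L) (a' b' : ℤ)
    (ha' : a' = ⌈((a : ℚ) + (b : ℚ)) / 2⌉) (hb' : b' = ⌊((a : ℚ) + (b : ℚ)) / 2⌋) :
    max (a' - (L + 1)) 0 + max (b' - (L + 1)) 0 ≤
      max (a - (L + 1)) 0 + max (b - (L + 1)) 0 - 1 := by
  have h1 : b' = (a + b) / 2 := by
    rw [hb']
    have := Rat.floor_intCast_div_natCast (a + b) 2
    push_cast at this ⊢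
    exact this
  have h2 : a' = -(-(a + b) / 2) := by
    have hc : ⌈((a:ℚ) + b) / 2⌉ = -⌊-(((a:ℚ) + b) / 2)⌋ := by
      rw [Int.floor_neg, neg_neg]
    have := Rat.floor_intCast_div_natCast (-(a + b)) 2
    push_cast [neg_div] at this
    rw [ha', hc, this]
  simp only [max_def]
  split_ifs <;> omega
end

section
/- Let L, a, b be integers with a ≤ L − 1 and b ≥ L + 1, and let a' = ⌈(a+b)/2⌉ and b' = ⌊(a+b)/2⌋ be the near-averages of a and b. Then Y₂(a') + Y₂(b') ≤ Y₂(a) + Y₂(b) − 1, where Y₂(x) = max(L − x, 0). (Case (ii): when a token with value strictly below the floor L meets a token with value at least the ceiling L+1, the Lyapunov function Y₂ decreases by at least 1.) -/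
/-- Case (ii): when a token with value strictly below the floor `L` meets a token with
value at least the ceiling `L+1`, the Lyapunov function `Y₂` decreases by at least 1. -/
theorem stmt_7 (L a b : ℤ) (ha : a ≤ L - 1) (hb : b ≥ L + 1) (a' b' : ℤ)
    (ha' : a' = ⌈((a : ℚ) + (b : ℚ)) / 2⌉) (hb' : b' = ⌊((a : ℚ) + (b : ℚ)) / 2⌋) :
    max (L - a') 0 + max (L - b') 0 ≤ max (L - a) 0 + max (L - b) 0 - 1 := by
  have h1 : b' = (a + b) / 2 := by
    rw [hb']
    rw [show ((a : ℚ) + b) / 2 = ((a + b : ℤ) : ℚ) / ((2 : ℕ) : ℚ) by push_cast; ring]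
    exact Rat.floor_intCast_div_natCast _ _
  have h2 : a' = -((-(a + b)) / 2) := by
    have hf : ⌊-(((a : ℚ) + b) / 2)⌋ = -a' := by rw [Int.floor_neg, ha']
    rw [show -(((a : ℚ) + b) / 2) = ((-(a + b) : ℤ) : ℚ) / ((2 : ℕ) : ℚ) by push_cast; ring,
      Rat.floor_intCast_div_natCast] at hf
    omega
  rcases le_total (L - a') 0 with h | h <;> rcases le_total (L - b') 0 with h' | h' <;>
    rcases le_total (L - a) 0 with ha2 | ha2 <;> rcases le_total (L - b) 0 with hb2 | hb2 <;>
    simp_all [max_eq_left, max_eq_right] <;> omega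
end

section
/- Let L, a, b be integers with a ≥ L + 2 and b ≤ L − 1, and let a' = ⌈(a+b)/2⌉ and b' = ⌊(a+b)/2⌋ be the near-averages of a and b. Then both Y₁(a') + Y₁(b') ≤ Y₁(a) + Y₁(b) − 1 and Y₂(a') + Y₂(b') ≤ Y₂(a) + Y₂(b) − 1, where Y₁(x) = max(x − (L+1), 0) and Y₂(x) = max(L − x, 0). (Case (iii) for a non-integer average, where the ceiling L+1 strictly exceeds the floor L: when a token with value strictly above the ceiling meets a token with value strictly below the floor, both Lyapunov functions decrease by at least 1.) -/
/-- Case (iii), non-integer average: when a token with value strictly above the ceiling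
`L+1` meets a token with value strictly below the floor `L`, both `Y₁` and `Y₂` decrease
by at least 1. -/
theorem stmt_8 (L a b : ℤ) (ha : a ≥ L + 2) (hb : b ≤ L - 1) (a' b' : ℤ)
    (ha' : a' = ⌈((a : ℚ) + (b : ℚ)) / 2⌉) (hb' : b' = ⌊((a : ℚ) + (b : ℚ)) / 2⌋) :
    (max (a' - (L + 1)) 0 + max (b' - (L + 1)) 0 ≤
        max (a - (L + 1)) 0 + max (b - (L + 1)) 0 - 1) ∧
      (max (L - a') 0 + max (L - b') 0 ≤ max (L - a) 0 + max (L - b) 0 - 1) := by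
  have h1 : (a : ℤ) + b ≤ 2 * a' := by
    have := Int.le_ceil (((a : ℚ) + (b : ℚ)) / 2)
    rw [← ha'] at this
    have : (a : ℚ) + b ≤ 2 * a' := by linarith
    exact_mod_cast this
  have h2 : 2 * a' ≤ a + b + 1 := by
    have := Int.ceil_lt_add_one (((a : ℚ) + (b : ℚ)) / 2)
    rw [← ha'] at this
    have h : 2 * (a' : ℚ) < a + b + 2 := by linarith
    have : (2 * a' : ℤ) < a + b + 2 := by exact_mod_cast h
    omega
  have h3 : 2 * b' ≤ a + b := by
    have := Int.floor_le (((a : ℚ) + (b : ℚ)) / 2)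
    rw [← hb'] at this
    have : 2 * (b' : ℚ) ≤ (a : ℚ) + b := by linarith
    exact_mod_cast this
  have h4 : a + b - 1 ≤ 2 * b' := by
    have := Int.sub_one_lt_floor (((a : ℚ) + (b : ℚ)) / 2)
    rw [← hb'] at this
    have h : (a : ℚ) + b - 2 < 2 * b' := by linarith
    have : (a : ℤ) + b - 2 < 2 * b' := by exact_mod_cast h
    omega
  omega
end

section
/- Let L, a, b be integers with a ≥ L + 1 and b ≤ L − 1, and let a' = ⌈(a+b)/2⌉ and b' = ⌊(a+b)/2⌋ be the near-averages of a and b. Then both max(a' − L, 0) + max(b' − L, 0) ≤ max(a − L, 0) + max(b − L, 0) − 1 and max(L − a', 0) + max(L − b', 0) ≤ max(L − a, 0) + max(L − b, 0) − 1. (Case (iii) for an integer average, where ceiling and floor coincide at L: when a token strictly above L meets a token strictly below L, both the excess above L and the deficit below L decrease by at least 1.) -/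
/-- Case (iii), integer average: when a token strictly above `L` meets a token strictly
below `L`, both the excess above `L` and the deficit below `L` decrease by at least 1. -/
theorem stmt_9 (L a b : ℤ) (ha : a ≥ L + 1) (hb : b ≤ L - 1) (a' b' : ℤ)
    (ha' : a' = ⌈((a : ℚ) + (b : ℚ)) / 2⌉) (hb' : b' = ⌊((a : ℚ) + (b : ℚ)) / 2⌋) :
    (max (a' - L) 0 + max (b' - L) 0 ≤ max (a - L) 0 + max (b - L) 0 - 1) ∧
      (max (L - a') 0 + max (L - b') 0 ≤ max (L - a) 0 + max (L - b) 0 - 1) := by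
  have hcast : ((a : ℚ) + (b : ℚ)) = ((a + b : ℤ) : ℚ) := by push_cast; ring
  have hfloor : b' = (a + b) / 2 := by
    rw [hb', hcast, show ((2 : ℚ)) = ((2 : ℕ) : ℚ) by norm_num,
      Rat.floor_intCast_div_natCast]
    norm_num
  have hceil : a' = -((-(a + b)) / 2) := by
    have : ⌊-((((a:ℚ)) + b) / 2)⌋ = -(a+b)/2 := by
      rw [show -(((a:ℚ) + b) / 2) = (((-(a+b) : ℤ)) : ℚ) / ((2:ℕ):ℚ) by push_cast; ring,
        Rat.floor_intCast_div_natCast]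
      norm_num
    rw [ha', ← neg_neg ⌈((a:ℚ) + b)/2⌉, ← Int.floor_neg, this]
  subst hfloor hceil
  omega
end

section
/- Let m ≥ 2 be a natural number, f : Fin m → ℤ, T = Σ_i f i, and suppose the rational average q = T/m is not an integer, so that ⌈q⌉ = ⌊q⌋ + 1; write L = ⌊q⌋. Define Y(f) = Σ_i (max(f i − (L+1), 0) + max(L − f i, 0)) and suppose Y(f) > 0. Then there exist distinct indices i, j such that the function f' obtained from f by replacing f i and f j with their near-averages ⌈(f i + f j)/2⌉ and ⌊(f i + f j)/2⌋ satisfies Σ f' = T and Y(f') ≤ Y(f) − 1. (One meeting of a suitable pair of tokens strictly decreases the Lyapunov function Y.) -/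
/-- key pointwise inequality for the Lyapunov terms -/
lemma stmt_14_key (L a b c d : ℤ) (h1 : L + 1 ≤ a) (h2 : b ≤ L) (h3 : b + 2 ≤ a)
    (h4 : c + d = a + b) (h5 : c ≤ a - 1) (h6 : b + 1 ≤ d) (h7 : d ≤ c) :
    max (c - (L + 1)) 0 + max (L - c) 0 + (max (d - (L + 1)) 0 + max (L - d) 0) ≤
      max (a - (L + 1)) 0 + max (L - a) 0 + (max (b - (L + 1)) 0 + max (L - b) 0) - 1 := by
  simp only [max_def]
  split_ifs <;> omega

/-- One meeting of a suitable pair of tokens strictly decreases the Lyapunov function `Y`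
(non-integer average case). -/
theorem stmt_14 (m : ℕ) (hm : 2 ≤ m) (f : Fin m → ℤ) (T : ℤ) (hT : T = ∑ i, f i)
    (hnotint : ¬ ∃ z : ℤ, (T : ℚ) / (m : ℚ) = (z : ℚ))
    (L : ℤ) (hL : L = ⌊(T : ℚ) / (m : ℚ)⌋)
    (Y : (Fin m → ℤ) → ℤ)
    (hY : ∀ g : Fin m → ℤ, Y g = ∑ i, (max (g i - (L + 1)) 0 + max (L - g i) 0))
    (hpos : 0 < Y f) :
    ∃ i j : Fin m, i ≠ j ∧
      (∑ k, (Function.update (Function.update f i ⌈((f i : ℚ) + (f j : ℚ)) / 2⌉) j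
          ⌊((f i : ℚ) + (f j : ℚ)) / 2⌋) k) = T ∧
      Y (Function.update (Function.update f i ⌈((f i : ℚ) + (f j : ℚ)) / 2⌉) j
          ⌊((f i : ℚ) + (f j : ℚ)) / 2⌋) ≤ Y f - 1 := by
  have hm0 : (0 : ℚ) < (m : ℚ) := by exact_mod_cast (by omega : 0 < m)
  -- strict bounds on T
  have hfl : (L : ℚ) ≤ (T : ℚ) / (m : ℚ) := hL ▸ Int.floor_le _
  have hne : (T : ℚ) / (m : ℚ) ≠ (L : ℚ) := fun h => hnotint ⟨L, h⟩
  have hlt : (L : ℚ) < (T : ℚ) / (m : ℚ) := lt_of_le_of_ne hfl (Ne.symm hne)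
  have hub : (T : ℚ) / (m : ℚ) < L + 1 := hL ▸ Int.lt_floor_add_one _
  have hT1 : (L : ℚ) * (m : ℚ) < (T : ℚ) := by rwa [← lt_div_iff₀ hm0]
  have hT2 : (T : ℚ) < ((L : ℚ) + 1) * (m : ℚ) := by rwa [div_lt_iff₀ hm0] at hub
  -- existence of a token above L+1 or below L
  have hexists : ∃ k, f k ≤ L - 1 ∨ L + 2 ≤ f k := by
    by_contra h
    push_neg at h
    have hYle : Y f ≤ 0 := by
      rw [hY]
      apply Finset.sum_nonpos
      intro k _
      have h1 := (h k).1
      have h2 := (h k).2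
      simp only [max_def]
      split_ifs <;> omega
    omega
  -- find i with f i ≥ L+1
  have hi : ∃ i, L + 1 ≤ f i := by
    by_contra h
    push_neg at h
    have hsum : T ≤ (m : ℤ) * L := by
      rw [hT]
      calc ∑ i, f i ≤ ∑ _i : Fin m, L :=
            Finset.sum_le_sum (fun k _ => by have := h k; omega)
        _ = (m : ℤ) * L := by
            rw [Finset.sum_const, Finset.card_univ, Fintype.card_fin, nsmul_eq_mul]
    have : ((m : ℤ) * L : ℚ) < (T : ℚ) := by push_cast; nlinarith
    have : (T : ℚ) ≤ ((m : ℤ) * L : ℚ) := by exact_mod_cast hsum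
    linarith
  -- find j with f j ≤ L
  have hj : ∃ j, f j ≤ L := by
    by_contra h
    push_neg at h
    have hsum : (m : ℤ) * (L + 1) ≤ T := by
      rw [hT]
      calc (m : ℤ) * (L + 1) = ∑ _i : Fin m, (L + 1) := by
            rw [Finset.sum_const, Finset.card_univ, Fintype.card_fin, nsmul_eq_mul]
        _ ≤ ∑ i, f i := Finset.sum_le_sum (fun k _ => by have := h k; omega)
    have h1 : ((m : ℤ) * (L + 1) : ℚ) ≤ (T : ℚ) := by exact_mod_cast hsum
    have : (T : ℚ) < ((m : ℤ) * (L + 1) : ℚ) := by push_cast; nlinarith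
    linarith
  -- get a suitable pair
  obtain ⟨i, j, hij, ha, hb, hab⟩ :
      ∃ i j : Fin m, i ≠ j ∧ L + 1 ≤ f i ∧ f j ≤ L ∧ f j + 2 ≤ f i := by
    obtain ⟨k, hk | hk⟩ := hexists
    · obtain ⟨i, hi⟩ := hi
      exact ⟨i, k, fun h => by subst h; omega, hi, by omega, by omega⟩
    · obtain ⟨j, hj⟩ := hj
      exact ⟨k, j, fun h => by subst h; omega, by omega, hj, by omega⟩
  refine ⟨i, j, hij, ?_⟩
  set a := f i with hadef
  set b := f j with hbdef
  set c : ℤ := ⌈((a : ℚ) + (b : ℚ)) / 2⌉ with hcdef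
  set d : ℤ := ⌊((a : ℚ) + (b : ℚ)) / 2⌋ with hddef
  -- arithmetic facts about c and d
  have hc1 : a + b ≤ 2 * c := by
    have h := Int.le_ceil (((a : ℚ) + (b : ℚ)) / 2)
    have : ((a + b : ℤ) : ℚ) ≤ ((2 * c : ℤ) : ℚ) := by push_cast; linarith
    exact_mod_cast this
  have hc2 : 2 * c ≤ a + b + 1 := by
    have h := Int.ceil_lt_add_one (((a : ℚ) + (b : ℚ)) / 2)
    have : ((2 * c : ℤ) : ℚ) < ((a + b + 2 : ℤ) : ℚ) := by push_cast; linarith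
    have := (by exact_mod_cast this : 2 * c < a + b + 2)
    omega
  have hd1 : 2 * d ≤ a + b := by
    have h := Int.floor_le (((a : ℚ) + (b : ℚ)) / 2)
    have : ((2 * d : ℤ) : ℚ) ≤ ((a + b : ℤ) : ℚ) := by push_cast; linarith
    exact_mod_cast this
  have hd2 : a + b - 1 ≤ 2 * d := by
    have h := Int.lt_floor_add_one (((a : ℚ) + (b : ℚ)) / 2)
    have : ((a + b : ℤ) : ℚ) < ((2 * d + 2 : ℤ) : ℚ) := by push_cast; linarith
    have := (by exact_mod_cast this : a + b < 2 * d + 2)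
    omega
  have hcd : c + d = a + b := by omega
  have hca : c ≤ a - 1 := by omega
  have hdb : b + 1 ≤ d := by omega
  set g : Fin m → ℤ := Function.update (Function.update f i c) j d with hgdef
  have hgi : g i = c := by
    rw [hgdef, Function.update_of_ne hij, Function.update_self]
  have hgj : g j = d := by rw [hgdef, Function.update_self]
  have hgk : ∀ k, k ≠ i → k ≠ j → g k = f k := by
    intro k hki hkj
    rw [hgdef, Function.update_of_ne hkj, Function.update_of_ne hki]
  -- generic sum-difference lemma
  have key : ∀ h : ℤ → ℤ,
      ∑ k, h (g k) = ∑ k, h (f k) + (h c - h a) + (h d - h b) := by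
    intro h
    have hsub : ∑ k, (h (g k) - h (f k)) =
        ∑ k ∈ ({i, j} : Finset (Fin m)), (h (g k) - h (f k)) := by
      refine (Finset.sum_subset (Finset.subset_univ _) ?_).symm
      intro k _ hk
      simp only [Finset.mem_insert, Finset.mem_singleton, not_or] at hk
      rw [hgk k hk.1 hk.2]
      ring
    rw [Finset.sum_pair hij, hgi, hgj, ← hadef, ← hbdef] at hsub
    have hdist : ∑ k, (h (g k) - h (f k)) = ∑ k, h (g k) - ∑ k, h (f k) :=
      Finset.sum_sub_distrib _ _
    linarith [hsub, hdist]
  constructor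
  · have := key id
    simp only [id] at this
    rw [hgdef] at this ⊢
    rw [this, hT]
    omega
  · rw [hY, hY]
    have hkf := key (fun x => max (x - (L + 1)) 0 + max (L - x) 0)
    rw [hgdef] at hkf ⊢
    have hbound := stmt_14_key L a b c d ha hb hab hcd hca hdb (by omega)
    omega
end

section
/- Let n ≥ 2 and l₀ ≥ 1 be natural numbers and c a real number with 0 < c ≤ 1. Let B : ℕ → (n×n real matrices) be a sequence of column-stochastic matrices such that (B k) j j ≥ c for every time step k and every node j, and let E be a strongly connected digraph on the n nodes such that for every m ∈ ℕ and every edge of E from j to l there exists a time step k with m ≤ k < m + l₀ and (B k) l j ≥ c (each edge of E is active, with weight at least c, at least once in every window of l₀ consecutive steps). Then every entry of the backward product B(l₀(n−1)−1) ⋯ B(1) · B(0) is at least c^{l₀(n−1)}. (This is the dynamic-topology random walk bound: over a time-varying digraph whose edges all appear within every window of l₀ steps, the probability that a token started at any node j is at any node i after l₀(n−1) steps is at least (1 + D⁺_max)^{−l₀(n−1)} when c = (1 + D⁺_max)^{−1}.) -/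
/-- Dynamic-topology random walk bound: if each edge of a strongly connected digraph is
active (with weight at least `c`) at least once in every window of `l₀` consecutive steps,
and all diagonal weights are at least `c`, then every entry of the backward product of the
first `l₀(n-1)` column-stochastic matrices is at least `c^(l₀(n-1))`. -/
theorem stmt_15 (n l₀ : ℕ) (hn : 2 ≤ n) (hl : 1 ≤ l₀) (c : ℝ) (hc0 : 0 < c) (hc1 : c ≤ 1)
    (B : ℕ → Matrix (Fin n) (Fin n) ℝ)
    (hnonneg : ∀ k l j, 0 ≤ B k l j) (hcol : ∀ k j, ∑ l, B k l j = 1)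
    (hdiag : ∀ k j, c ≤ B k j j)
    (E : Fin n → Fin n → Prop) (hirr : ∀ j, ¬ E j j)
    (hconn : ∀ i j : Fin n, i ≠ j → Relation.TransGen E j i)
    (hactive : ∀ m : ℕ, ∀ l j : Fin n, E l j → ∃ k, m ≤ k ∧ k < m + l₀ ∧ c ≤ B k l j) :
    ∀ i j : Fin n,
      c ^ (l₀ * (n - 1)) ≤ (((List.range (l₀ * (n - 1))).reverse.map B).prod) i j := by
  intro i j₀
  set P : ℕ → Matrix (Fin n) (Fin n) ℝ := fun t => ((List.range t).reverse.map B).prod with hP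
  have hPsucc : ∀ t, P (t + 1) = B t * P t := by
    intro t
    simp [hP, List.range_succ]
  have hP0 : P 0 = 1 := by simp [hP]
  have hPnonneg : ∀ t a b, 0 ≤ P t a b := by
    intro t
    induction t with
    | zero =>
      intro a b
      rw [hP0, Matrix.one_apply]
      split_ifs <;> norm_num
    | succ t ih =>
      intro a b
      rw [hPsucc, Matrix.mul_apply]
      exact Finset.sum_nonneg fun q _ => mul_nonneg (hnonneg t a q) (ih q b)
  -- step lemma
  have hstep : ∀ t (a b : Fin n), c ≤ B t a b → c ^ t ≤ P t b j₀ →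
      c ^ (t + 1) ≤ P (t + 1) a j₀ := by
    intro t a b hB hPb
    rw [hPsucc, Matrix.mul_apply]
    have h1 : c ^ (t + 1) ≤ B t a b * P t b j₀ := by
      rw [pow_succ, mul_comm]
      exact mul_le_mul hB hPb (pow_pos hc0 t).le (hc0.le.trans hB)
    refine h1.trans ?_
    exact Finset.single_le_sum (f := fun q => B t a q * P t q j₀)
      (fun q _ => mul_nonneg (hnonneg t a q) (hPnonneg t q j₀)) (Finset.mem_univ b)
  set S : ℕ → Finset (Fin n) := fun t => Finset.univ.filter (fun a => c ^ t ≤ P t a j₀) with hS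
  have hmemS : ∀ t a, a ∈ S t ↔ c ^ t ≤ P t a j₀ := by
    intro t a; simp [hS]
  have hmono1 : ∀ t, S t ⊆ S (t + 1) := by
    intro t a ha
    rw [hmemS] at ha ⊢
    exact hstep t a a (hdiag t a) ha
  have hmono : ∀ t t', t ≤ t' → S t ⊆ S t' := by
    intro t t' h
    induction h with
    | refl => exact subset_rfl
    | step h ih => exact fun _ ha => hmono1 _ (ih ha)
  have hj0 : ∀ t, j₀ ∈ S t := by
    intro t
    refine hmono 0 t (Nat.zero_le t) ?_
    rw [hmemS, hP0]
    simp [Matrix.one_apply]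
  -- boundary edge from a strongly connected digraph
  have hreach : ∀ (T : Finset (Fin n)), j₀ ∈ T → T ≠ Finset.univ →
      ∃ a b, a ∉ T ∧ b ∈ T ∧ E a b := by
    intro T hj hT
    obtain ⟨x, hx⟩ : ∃ x, x ∉ T := by
      by_contra h; push_neg at h; exact hT (Finset.eq_univ_of_forall h)
    have key : ∀ y : Fin n, Relation.TransGen E x y → y ∈ T →
        ∃ a b, a ∉ T ∧ b ∈ T ∧ E a b := by
      intro y htg
      induction htg with
      | single h => intro hy; exact ⟨_, _, hx, hy, h⟩
      | @tail m z htg h ih =>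
        intro hz
        by_cases hm : m ∈ T
        · exact ih hm
        · exact ⟨m, z, hm, hz, h⟩
    have hne : j₀ ≠ x := fun h => hx (h ▸ hj)
    exact key j₀ (hconn j₀ x hne) hj
  -- growth of S over each window
  have hgrow : ∀ m, S m ≠ Finset.univ → (S m).card + 1 ≤ (S (m + l₀)).card := by
    intro m hne
    obtain ⟨a, b, haT, hbT, hE⟩ := hreach (S m) (hj0 m) hne
    obtain ⟨k, hmk, hkm, hB⟩ := hactive m a b hE
    have hbk : b ∈ S k := hmono m k hmk hbT
    have hak : a ∈ S (k + 1) := by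
      rw [hmemS]
      exact hstep k a b hB ((hmemS k b).mp hbk)
    have ha : a ∈ S (m + l₀) := hmono (k + 1) (m + l₀) hkm hak
    have hsub : insert a (S m) ⊆ S (m + l₀) := by
      intro x hx
      rcases Finset.mem_insert.mp hx with h | h
      · exact h ▸ ha
      · exact hmono m (m + l₀) (Nat.le_add_right m l₀) h
    calc (S m).card + 1 = (insert a (S m)).card := (Finset.card_insert_of_notMem haT).symm
      _ ≤ (S (m + l₀)).card := Finset.card_le_card hsub
  have hcard : ∀ r, min n (r + 1) ≤ (S (l₀ * r)).card := by
    intro r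
    induction r with
    | zero =>
      have h0 : 0 < (S 0).card := Finset.card_pos.mpr ⟨j₀, hj0 0⟩
      have : l₀ * 0 = 0 := by ring
      rw [this]
      omega
    | succ r ih =>
      have hEq : l₀ * (r + 1) = l₀ * r + l₀ := by ring
      by_cases h : S (l₀ * r) = Finset.univ
      · have : (S (l₀ * (r + 1))).card = n := by
          have hsub : S (l₀ * r) ⊆ S (l₀ * (r + 1)) := by
            rw [hEq]; exact hmono _ _ (Nat.le_add_right _ _)
          have huv : S (l₀ * (r + 1)) = Finset.univ :=
            Finset.eq_univ_of_forall fun x => hsub (by rw [h]; exact Finset.mem_univ x)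
          rw [huv]
          simp
        omega
      · have := hgrow (l₀ * r) h
        rw [← hEq] at this
        have hle : (S (l₀ * (r + 1))).card ≤ n := by
          simpa using Finset.card_le_univ (S (l₀ * (r + 1)))
        omega
  have hfin : (S (l₀ * (n - 1))).card = n := by
    have h1 := hcard (n - 1)
    have h2 : n - 1 + 1 = n := by omega
    rw [h2, min_self] at h1
    have hle : (S (l₀ * (n - 1))).card ≤ n := by
      simpa using Finset.card_le_univ (S (l₀ * (n - 1)))
    omega
  have huniv : S (l₀ * (n - 1)) = Finset.univ := by
    apply Finset.eq_univ_of_card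
    simpa using hfin
  have : i ∈ S (l₀ * (n - 1)) := huniv ▸ Finset.mem_univ i
  exact (hmemS _ i).mp this
end

section
/- Let n ≥ 2 and M ≥ 1 be natural numbers and c a real number with 0 < c ≤ 1. Let B₁, …, B_M be n×n column-stochastic matrices, each satisfying (B_θ) j j ≥ c for every node j, and let E be a strongly connected digraph on the n nodes such that for every edge of E from j to l there exists θ with (B_θ) l j ≥ c. Let p₁, …, p_M be positive reals with Σ_θ p_θ = 1 and p_min = min_θ p_θ. Then every entry of the matrix power (Σ_θ p_θ B_θ)^{n−1} is at least (p_min · c)^{n−1}. (This is the i.i.d. dynamic-topology bound: when at each step one of the digraphs G_{d_θ} is selected independently with probability p_θ and the union graph is strongly connected, the probability that a token is at any given node after n−1 steps is at least (p_min/(1 + D⁺_max))^{n−1}, with c = (1 + D⁺_max)^{−1}.) -/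
/-- Reach within k steps along E. -/
def ReachN {α : Type*} (E : α → α → Prop) : ℕ → α → α → Prop
  | 0, i, j => i = j
  | (k+1), i, j => ReachN E k i j ∨ ∃ l, E i l ∧ ReachN E k l j

lemma cross_lemma {α : Type*} (E : α → α → Prop) (S : α → Prop) :
    ∀ i j : α, Relation.TransGen E i j → ¬ S i → S j →
      ∃ a b, E a b ∧ ¬ S a ∧ S b := by
  intro i j h
  induction h using Relation.TransGen.head_induction_on with
  | single h => exact fun hi hj => ⟨_, _, h, hi, hj⟩
  | head h htg IH =>
      rename_i x y
      intro hi hj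
      by_cases hk : S y
      · exact ⟨_, _, h, hi, hk⟩
      · exact IH hk hj

/-- I.i.d. dynamic-topology bound: if at each step one of `M` column-stochastic matrices is
selected with probability `p θ`, each has diagonal at least `c`, and each edge of a strongly
connected digraph is covered by some matrix with weight at least `c`, then every entry of
`(∑ θ, p θ • B θ)^(n-1)` is at least `(p_min · c)^(n-1)`. -/
theorem stmt_16 (n M : ℕ) (hn : 2 ≤ n) (hM : 1 ≤ M) (c : ℝ) (hc0 : 0 < c) (hc1 : c ≤ 1)
    (B : Fin M → Matrix (Fin n) (Fin n) ℝ)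
    (hnonneg : ∀ θ l j, 0 ≤ B θ l j) (hcol : ∀ θ j, ∑ l, B θ l j = 1)
    (hdiag : ∀ θ j, c ≤ B θ j j)
    (E : Fin n → Fin n → Prop) (hirr : ∀ j, ¬ E j j)
    (hconn : ∀ i j : Fin n, i ≠ j → Relation.TransGen E j i)
    (hcover : ∀ l j : Fin n, E l j → ∃ θ, c ≤ B θ l j)
    (p : Fin M → ℝ) (hp : ∀ θ, 0 < p θ) (hpsum : ∑ θ, p θ = 1)
    (pmin : ℝ) (hpmin : IsLeast (Set.range p) pmin) :
    ∀ i j : Fin n, (pmin * c) ^ (n - 1) ≤ ((∑ θ, p θ • B θ) ^ (n - 1)) i j := by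
  classical
  set A : Matrix (Fin n) (Fin n) ℝ := ∑ θ, p θ • B θ with hA
  set d : ℝ := pmin * c with hd
  obtain ⟨θ0, hθ0⟩ := hpmin.1
  have hpmin_pos : 0 < pmin := hθ0 ▸ hp θ0
  have hpmin_le : ∀ θ, pmin ≤ p θ := fun θ => hpmin.2 ⟨θ, rfl⟩
  have hpmin1 : pmin ≤ 1 := by
    calc pmin = p θ0 := hθ0.symm
    _ ≤ ∑ θ, p θ := Finset.single_le_sum (fun θ _ => (hp θ).le) (Finset.mem_univ θ0)
    _ = 1 := hpsum
  have hd0 : 0 < d := mul_pos hpmin_pos hc0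
  have hdc : d ≤ c := by
    calc d = pmin * c := rfl
    _ ≤ 1 * c := by nlinarith
    _ = c := one_mul c
  have hAentry : ∀ a b, A a b = ∑ θ, p θ * B θ a b := by
    intro a b; simp [hA, Matrix.sum_apply]
  have hA0 : ∀ a b, 0 ≤ A a b := by
    intro a b; rw [hAentry]
    exact Finset.sum_nonneg fun θ _ => mul_nonneg (hp θ).le (hnonneg θ a b)
  have hAdiag : ∀ a, d ≤ A a a := by
    intro a
    have : c ≤ A a a := by
      rw [hAentry]
      calc c = ∑ θ, p θ * c := by rw [← Finset.sum_mul, hpsum, one_mul]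
      _ ≤ ∑ θ, p θ * B θ a a :=
        Finset.sum_le_sum fun θ _ => mul_le_mul_of_nonneg_left (hdiag θ a) (hp θ).le
    linarith
  have hAedge : ∀ a b, E a b → d ≤ A a b := by
    intro a b hab
    obtain ⟨θ, hθ⟩ := hcover a b hab
    rw [hAentry]
    calc d = pmin * c := rfl
    _ ≤ p θ * B θ a b := mul_le_mul (hpmin_le θ) hθ hc0.le (hp θ).le
    _ ≤ ∑ θ', p θ' * B θ' a b :=
      Finset.single_le_sum (fun θ' _ => mul_nonneg (hp θ').le (hnonneg θ' a b))
        (Finset.mem_univ θ)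
  have hApow0 : ∀ k a b, 0 ≤ (A ^ k) a b := by
    intro k
    induction k with
    | zero => intro a b; rw [pow_zero]; by_cases h : a = b <;> simp [Matrix.one_apply, h]
    | succ k IH =>
        intro a b
        rw [pow_succ', Matrix.mul_apply]
        exact Finset.sum_nonneg fun l _ => mul_nonneg (hA0 a l) (IH l b)
  -- main entry bound from ReachN
  have hkey : ∀ k i j, ReachN E k i j → d ^ k ≤ (A ^ k) i j := by
    intro k
    induction k with
    | zero => intro i j h; cases h; simp [Matrix.one_apply]
    | succ k IH =>
        intro i j h
        have step : ∀ l, d ≤ A i l → d ^ k ≤ (A ^ k) l j → d ^ (k+1) ≤ (A ^ (k+1)) i j := by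
          intro l h1 h2
          have hmul : (A ^ (k+1)) i j = ∑ m, A i m * (A ^ k) m j := by
            rw [pow_succ', Matrix.mul_apply]
          rw [hmul]
          calc d ^ (k+1) = d * d ^ k := by ring
          _ ≤ A i l * (A ^ k) l j :=
            mul_le_mul h1 h2 (pow_nonneg hd0.le k) (hA0 i l)
          _ ≤ ∑ m, A i m * (A ^ k) m j :=
            Finset.single_le_sum (fun m _ => mul_nonneg (hA0 i m) (hApow0 k m j))
              (Finset.mem_univ l)
        rcases h with h | ⟨l, hE, h⟩
        · exact step i (hAdiag i) (IH i j h)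
        · exact step l (hAedge i l hE) (IH l j h)
  -- everyone reaches j within n-1 steps
  intro i j
  have hreach_self : ∀ k, ReachN E k j j := by
    intro k; induction k with
    | zero => rfl
    | succ k IH => exact Or.inl IH
  set T : ℕ → Finset (Fin n) := fun k => Finset.univ.filter (fun i => ReachN E k i j) with hT
  have hjT : ∀ k, j ∈ T k := fun k => Finset.mem_filter.2 ⟨Finset.mem_univ j, hreach_self k⟩
  have hgrow : ∀ k, T k = Finset.univ ∨ (k + 1) ≤ (T k).card := by
    intro k
    induction k with
    | zero =>
        by_cases h : T 0 = Finset.univ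
        · exact Or.inl h
        · exact Or.inr (Finset.card_pos.2 ⟨j, hjT 0⟩)
    | succ k IH =>
        by_cases h : T (k+1) = Finset.univ
        · exact Or.inl h
        right
        have hmono : T k ⊆ T (k+1) := by
          intro a ha
          rw [hT, Finset.mem_filter] at ha ⊢
          exact ⟨ha.1, Or.inl ha.2⟩
        have hne : T k ≠ Finset.univ := by
          intro heq
          exact h (Finset.eq_univ_of_forall fun a => hmono (heq ▸ Finset.mem_univ a))
        obtain ⟨i0, hi0⟩ : ∃ i0, i0 ∉ T k := by
          by_contra hcon; push_neg at hcon
          exact hne (Finset.eq_univ_of_forall hcon)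
        have hi0j : i0 ≠ j := fun heq => hi0 (heq ▸ hjT k)
        have htg : Relation.TransGen E i0 j := hconn j i0 (Ne.symm hi0j)
        have hi0r : ¬ ReachN E k i0 j := fun hr => hi0 (Finset.mem_filter.2 ⟨Finset.mem_univ _, hr⟩)
        obtain ⟨a, b, hab, hna, hb⟩ :=
          cross_lemma E (fun x => ReachN E k x j) i0 j htg hi0r (hreach_self k)
        have haT1 : a ∈ T (k+1) :=
          Finset.mem_filter.2 ⟨Finset.mem_univ _, Or.inr ⟨b, hab, hb⟩⟩
        have haTk : a ∉ T k := fun hmem => hna (Finset.mem_filter.1 hmem).2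
        have hss : T k ⊂ T (k+1) := ⟨hmono, fun hsub => haTk (hsub haT1)⟩
        have hlt : (T k).card < (T (k+1)).card := Finset.card_lt_card hss
        rcases IH with heq | hle
        · exact absurd heq hne
        · omega
  have hTuniv : T (n-1) = Finset.univ := by
    rcases hgrow (n-1) with h | h
    · exact h
    · have h1 : (T (n-1)).card ≤ n := by
        simpa using Finset.card_le_univ (T (n-1))
      apply Finset.eq_univ_of_card
      rw [Fintype.card_fin]
      omega
  have : i ∈ T (n-1) := hTuniv ▸ Finset.mem_univ i
  exact hkey (n-1) i j (Finset.mem_filter.1 this).2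
end
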